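/- For the constant-correlation covariance matrix Σ (Σᵢⱼ = c σᵢ σⱼ for i ≠ j, Σᵢᵢ = σᵢ², σᵢ > 0, 0 ≤ c < 1), the maximum diversification portfolio x^MD with weights xᵢ = σᵢ⁻¹ / ∑ⱼ σⱼ⁻¹ maximizes the diversification ratio DR(x) = (∑ᵢ xᵢ σᵢ) / √(xᵀ Σ x) over the simplex Δ = {x : ∑ xᵢ = 1, x ≥ 0}. -/

import Mathlib

/-- For the constant-correlation covariance matrix, the portfolio
`xᵢ = σᵢ⁻¹ / ∑ⱼ σⱼ⁻¹` maximizes the diversification ratio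
`DR(x) = (∑ᵢ xᵢ σᵢ)/√(xᵀSx)` over the standard simplex. -/
theorem stmt5 (n : ℕ) (hn : 2 ≤ n) (σ : Fin n → ℝ) (hσ : ∀ i, 0 < σ i)
    (c : ℝ) (hc1 : 0 ≤ c) (hc2 : c < 1)
    (S : Matrix (Fin n) (Fin n) ℝ)
    (hS : ∀ i j, S i j = if i = j then (σ i) ^ 2 else c * σ i * σ j)
    (xMD : Fin n → ℝ) (hxMD : ∀ i, xMD i = (σ i)⁻¹ / ∑ j, (σ j)⁻¹)
    (DR : (Fin n → ℝ) → ℝ)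
    (hDR : ∀ x, DR x = (∑ i, x i * σ i) / Real.sqrt (∑ i, ∑ j, x i * S i j * x j)) :
    ((∀ i, 0 ≤ xMD i) ∧ (∑ i, xMD i) = 1) ∧
    ∀ x : Fin n → ℝ, (∀ i, 0 ≤ x i) → (∑ i, x i) = 1 → DR x ≤ DR xMD := by
  have hn0 : (0:ℝ) < (n:ℝ) := by
    have : 0 < n := by omega
    exact_mod_cast this
  set T : ℝ := ∑ j, (σ j)⁻¹ with hT
  have hTpos : 0 < T :=
    Finset.sum_pos (fun j _ => inv_pos.2 (hσ j)) ⟨⟨0, by omega⟩, Finset.mem_univ _⟩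
  have hnonneg : ∀ i, 0 ≤ xMD i := by
    intro i; rw [hxMD]
    exact div_nonneg (inv_nonneg.2 (hσ i).le) hTpos.le
  have hsum1 : ∑ i, xMD i = 1 := by
    simp only [hxMD, div_eq_mul_inv, ← Finset.sum_mul, ← hT]
    field_simp
  -- quadratic form identity
  have key : ∀ x : Fin n → ℝ,
      ∑ i, ∑ j, x i * S i j * x j
        = (1 - c) * (∑ i, (x i * σ i) ^ 2) + c * (∑ i, x i * σ i) ^ 2 := by
    intro x
    have h1 : ∀ i, ∑ j, x i * S i j * x j
        = c * (x i * σ i) * (∑ j, x j * σ j) + (1 - c) * (x i * σ i) ^ 2 := by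
      intro i
      have h2 : ∀ j, x i * S i j * x j
          = c * (x i * σ i) * (x j * σ j) + (if i = j then (1 - c) * (x i * σ i) ^ 2 else 0) := by
        intro j
        rw [hS]
        by_cases h : i = j
        · subst h; simp; ring
        · simp [h]; ring
      simp only [h2, Finset.sum_add_distrib, Finset.sum_ite_eq, Finset.mem_univ, if_true,
        ← Finset.mul_sum]
    simp only [h1, Finset.sum_add_distrib, ← Finset.sum_mul, ← Finset.mul_sum]
    ring
  -- the constant k
  set k : ℝ := (1 - c) / n + c with hk
  have hkpos : 0 < k := by
    have : 0 < (1 - c) / n := div_pos (by linarith) hn0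
    simp only [hk]; linarith
  refine ⟨⟨hnonneg, hsum1⟩, ?_⟩
  intro x hx hxs
  -- s and Q for general x
  set s : ℝ := ∑ i, x i * σ i with hs
  have hspos : 0 < s := by
    rcases Finset.exists_lt_of_sum_lt (f := fun _ : Fin n => (0:ℝ)) (g := x)
      (by rw [hxs]; simp) with ⟨i, _, hi⟩
    exact Finset.sum_pos' (fun j _ => mul_nonneg (hx j) (hσ j).le)
      ⟨i, Finset.mem_univ i, mul_pos hi (hσ i)⟩
  set Q : ℝ := ∑ i, (x i * σ i) ^ 2 with hQ
  have hCS : s ^ 2 ≤ n * Q := by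
    simpa [hs, hQ] using sq_sum_le_card_mul_sum_sq (s := Finset.univ) (f := fun i => x i * σ i)
  have hDlb : s ^ 2 * k ≤ (1 - c) * Q + c * s ^ 2 := by
    have h1 : s ^ 2 * ((1 - c) / n) ≤ (1 - c) * Q := by
      rw [div_eq_mul_inv, ← mul_assoc]
      have : s ^ 2 * (1 - c) * (n:ℝ)⁻¹ ≤ ((n:ℝ) * Q) * (1 - c) * (n:ℝ)⁻¹ := by
        apply mul_le_mul_of_nonneg_right (mul_le_mul_of_nonneg_right hCS (by linarith))
          (inv_nonneg.2 hn0.le)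
      calc s ^ 2 * (1 - c) * (n:ℝ)⁻¹ ≤ ((n:ℝ) * Q) * (1 - c) * (n:ℝ)⁻¹ := this
        _ = (1 - c) * Q := by field_simp
    simp only [hk, mul_add]
    have h2 : s ^ 2 * c = c * s ^ 2 := by ring
    linarith [h1]
  -- DR x ≤ 1/√k
  have hDRx : DR x ≤ 1 / Real.sqrt k := by
    rw [hDR, key, ← hs, ← hQ]
    have hsqk : Real.sqrt (s ^ 2 * k) = s * Real.sqrt k := by
      rw [Real.sqrt_mul (by positivity), Real.sqrt_sq hspos.le]
    have hle : s * Real.sqrt k ≤ Real.sqrt ((1 - c) * Q + c * s ^ 2) := by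
      rw [← hsqk]; exact Real.sqrt_le_sqrt hDlb
    have hpos : 0 < s * Real.sqrt k := mul_pos hspos (Real.sqrt_pos.2 hkpos)
    calc s / Real.sqrt ((1 - c) * Q + c * s ^ 2) ≤ s / (s * Real.sqrt k) :=
          div_le_div_of_nonneg_left hspos.le hpos hle
      _ = 1 / Real.sqrt k := by
          rw [div_eq_div_iff (by positivity) (Real.sqrt_pos.2 hkpos).ne']; ring
  -- DR xMD = 1/√k
  have hyMD : ∀ i, xMD i * σ i = 1 / T := by
    intro i; rw [hxMD, div_mul_eq_mul_div, inv_mul_cancel₀ (hσ i).ne']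
  have hsMD : ∑ i, xMD i * σ i = n / T := by
    simp [hyMD, Finset.sum_const]; ring
  have hQMD : ∑ i, (xMD i * σ i) ^ 2 = n / T ^ 2 := by
    simp [hyMD, Finset.sum_const, div_pow]; ring
  have hDMD : (1 - c) * (n / T ^ 2) + c * (n / T) ^ 2 = (n / T) ^ 2 * k := by
    field_simp [hk]; rw [hk]; field_simp
  have hDRMD : DR xMD = 1 / Real.sqrt k := by
    rw [hDR, key, hsMD, hQMD, hDMD]
    have hnT : (0:ℝ) < n / T := div_pos hn0 hTpos
    rw [Real.sqrt_mul (by positivity), Real.sqrt_sq hnT.le,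
      div_eq_div_iff (by positivity) (Real.sqrt_pos.2 hkpos).ne']
    ring
  rw [hDRMD]; exact hDRx
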